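/- Let C ⊆ GF(4)ⁿ be an additive self-orthogonal code. Then the shadow enumerator S(x,y) = (1/|C|) · Σ_{u ∈ C} (x+3y)^{n−wt(u)} (y−x)^{wt(u)}, regarded as a polynomial in ℚ[x,y], has all coefficients nonnegative. -/
import Mathlib


noncomputable section

open Finset Polynomial

/-- The field `GF(4)` with four elements. -/
abbrev F4 := GaloisField 2 2

/-- The trace inner product `u∗v = Σⱼ (uⱼ v̄ⱼ + ūⱼ vⱼ)` on `GF(4)ⁿ`,
where conjugation is `x̄ = x²`.  It takes values in the prime subfield. -/
def trIP {n : ℕ} (u v : Fin n → F4) : F4 :=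
  ∑ j, (u j * (v j) ^ 2 + (u j) ^ 2 * v j)

/-- The Hamming weight of a vector in `GF(4)ⁿ`. -/
def wt {n : ℕ} (u : Fin n → F4) : ℕ := Set.ncard {j | u j ≠ 0}

/-- The dual of a code with respect to the trace inner product. -/
def trDual {n : ℕ} (C : Set (Fin n → F4)) : Set (Fin n → F4) :=
  {u | ∀ v ∈ C, trIP u v = 0}


namespace ShadowAux

noncomputable instance : Fintype F4 := Fintype.ofFinite _

lemma card_F4 : Fintype.card F4 = 4 := by
  rw [← Nat.card_eq_fintype_card, GaloisField.card 2 2 (by norm_num)]; norm_num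

lemma pow4 (a : F4) : a ^ 4 = a := by
  have h := FiniteField.pow_card a
  rwa [card_F4] at h

lemma one_add_one : (1 : F4) + 1 = 0 := CharTwo.add_self_eq_zero 1

lemma cube_eq_one {a : F4} (ha : a ≠ 0) : a ^ 3 = 1 := by
  have h := pow4 a
  have : a ^ 3 * a = 1 * a := by rw [one_mul, ← pow_succ]; exact h
  exact mul_right_cancel₀ ha this

lemma tr_cases (x : F4) : x + x ^ 2 = 0 ∨ x + x ^ 2 = 1 := by
  have hsq : (x + x ^ 2) ^ 2 = x + x ^ 2 := by
    rw [add_pow_char x (x ^ 2) 2, ← pow_mul]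
    rw [show (2 * 2 : ℕ) = 4 from rfl, pow4, add_comm]
  have h : (x + x ^ 2) * ((x + x ^ 2) - 1) = 0 := by ring_nf; linear_combination hsq
  rcases mul_eq_zero.mp h with h | h
  · exact Or.inl h
  · exact Or.inr (by linear_combination h)

open scoped Classical in
def tt (x : F4) : ℕ := if x + x ^ 2 = 0 then 0 else 1

open scoped Classical in
def cc (a b : F4) : ℚ := (if a = 0 then 1 else -1) * (-1) ^ (tt (a * b ^ 2))

open scoped Classical in
def term (b : F4) : MvPolynomial (Fin 2) ℚ := if b = 0 then MvPolynomial.X 0 else MvPolynomial.X 1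

def chi {n : ℕ} (v u : Fin n → F4) : ℚ := ∏ j, cc (u j) (v j)

lemma tt_zero : tt 0 = 0 := by simp [tt]

lemma tt_one : tt 1 = 0 := by simp [tt, one_add_one]

lemma tt_cast (x : F4) : ((tt x : ℕ) : F4) = x + x ^ 2 := by
  unfold tt
  rcases tr_cases x with h | h <;> simp [h]

lemma tt_eq_one {x : F4} (h0 : x ≠ 0) (h1 : x ≠ 1) : tt x = 1 := by
  unfold tt
  rw [if_neg]
  intro h
  have : x * (1 + x) = 0 := by ring_nf; linear_combination h
  rcases mul_eq_zero.mp this with h | h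
  · exact h0 h
  · exact h1 (by linear_combination h - one_add_one)

lemma neg_one_tt_add (x y : F4) : ((-1 : ℚ)) ^ tt (x + y) = (-1) ^ tt x * (-1) ^ tt y := by
  have hxy : (x + y) + (x + y) ^ 2 = (x + x ^ 2) + (y + y ^ 2) := by
    rw [add_pow_char x y 2]; ring
  unfold tt
  rcases tr_cases x with hx | hx <;> rcases tr_cases y with hy | hy <;>
    simp [hx, hy, hxy, one_add_one, one_ne_zero]

lemma cc_add (a a' b : F4) :
    cc (a + a') b = cc a b * cc a' b * (-1) ^ (tt (a * a' ^ 2)) := by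
  classical
  have hdelta : (if a + a' = 0 then (1:ℚ) else -1) =
      (if a = 0 then (1:ℚ) else -1) * (if a' = 0 then (1:ℚ) else -1) * (-1) ^ (tt (a * a' ^ 2)) := by
    by_cases ha : a = 0
    · subst ha; simp [tt_zero]
    · by_cases ha' : a' = 0
      · subst ha'; simp [tt_zero, ha]
      · by_cases hee : a = a'
        · subst hee
          have h3 : a * a ^ 2 = 1 := by
            have := cube_eq_one ha; linear_combination this
          rw [CharTwo.add_self_eq_zero, h3, tt_one]
          simp [ha]
        · have hne : a + a' ≠ 0 := fun h => hee (by linear_combination h - CharTwo.add_self_eq_zero a')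
          have hx0 : a * a' ^ 2 ≠ 0 := mul_ne_zero ha (pow_ne_zero _ ha')
          have hx1 : a * a' ^ 2 ≠ 1 :=
            fun h => hee (by linear_combination a' * h - a * cube_eq_one ha')
          rw [if_neg hne, if_neg ha, if_neg ha', tt_eq_one hx0 hx1]; ring
  have h1 : (a + a') * b ^ 2 = a * b ^ 2 + a' * b ^ 2 := by ring
  unfold cc
  rw [h1, neg_one_tt_add, hdelta]; ring

lemma sum_term : ∑ b : F4, term b = MvPolynomial.X 0 + 3 * MvPolynomial.X 1 := by
  classical
  rw [← Finset.sum_erase_add _ _ (mem_univ (0 : F4))]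
  have h : ∑ b ∈ univ.erase (0:F4), term b = ∑ _b ∈ univ.erase (0:F4), (MvPolynomial.X 1 : MvPolynomial (Fin 2) ℚ) := by
    refine Finset.sum_congr rfl fun b hb => ?_
    simp [term, (Finset.mem_erase.mp hb).1]
  rw [h, Finset.sum_const, Finset.card_erase_of_mem (mem_univ _), card_univ, card_F4]
  simp [term]
  ring

lemma sum_cc_term_zero : ∑ b : F4, MvPolynomial.C (cc 0 b) * term b =
    (MvPolynomial.X 0 + 3 * MvPolynomial.X 1 : MvPolynomial (Fin 2) ℚ) := by
  rw [← sum_term]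
  refine Finset.sum_congr rfl fun b _ => ?_
  simp [cc, tt_zero]

lemma sum_cc_term_ne {a : F4} (ha : a ≠ 0) : ∑ b : F4, MvPolynomial.C (cc a b) * term b =
    (MvPolynomial.X 1 - MvPolynomial.X 0 : MvPolynomial (Fin 2) ℚ) := by
  classical
  set b0 : F4 := (a⁻¹) ^ 2 with hb0
  have hb0ne : b0 ≠ 0 := pow_ne_zero _ (inv_ne_zero ha)
  have hab0 : a * b0 ^ 2 = 1 := by
    rw [hb0, ← pow_mul]
    rw [show (2*2:ℕ) = 4 from rfl, pow4, mul_inv_cancel₀ ha]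
  have key : ∀ b : F4, MvPolynomial.C (cc a b) * term b =
      if b = 0 then -(MvPolynomial.X 0 : MvPolynomial (Fin 2) ℚ)
      else if b = b0 then -(MvPolynomial.X 1) else MvPolynomial.X 1 := by
    intro b
    by_cases hb : b = 0
    · subst hb
      simp [cc, term, ha, tt_zero]
    · by_cases hbb : b = b0
      · subst hbb
        simp [cc, term, ha, hb0ne, hab0, tt_one]
      · have hx0 : a * b ^ 2 ≠ 0 := mul_ne_zero ha (pow_ne_zero _ hb)
        have hx1 : a * b ^ 2 ≠ 1 := by
          intro h
          have h2 : b ^ 2 = a⁻¹ := eq_inv_of_mul_eq_one_right (by linear_combination h)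
          exact hbb (by rw [← pow4 b, show (4:ℕ) = 2*2 from rfl, pow_mul, h2, hb0])
        simp [cc, term, ha, hb, hbb, tt_eq_one hx0 hx1]
  rw [Finset.sum_congr rfl fun b _ => key b]
  rw [← Finset.sum_erase_add _ _ (mem_univ (0 : F4))]
  have hb0mem : b0 ∈ (univ : Finset F4).erase 0 := Finset.mem_erase.mpr ⟨hb0ne, mem_univ _⟩
  rw [← Finset.sum_erase_add _ _ hb0mem]
  have h2 : ∑ b ∈ ((univ : Finset F4).erase 0).erase b0,
      (if b = 0 then -(MvPolynomial.X 0 : MvPolynomial (Fin 2) ℚ)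
       else if b = b0 then -(MvPolynomial.X 1) else MvPolynomial.X 1) =
      ∑ _b ∈ ((univ : Finset F4).erase 0).erase b0, (MvPolynomial.X 1 : MvPolynomial (Fin 2) ℚ) := by
    refine Finset.sum_congr rfl fun b hb => ?_
    obtain ⟨hbb0, hb0'⟩ := Finset.mem_erase.mp hb
    rw [if_neg (Finset.mem_erase.mp hb0').1, if_neg hbb0]
  rw [h2, Finset.sum_const, Finset.card_erase_of_mem hb0mem,
    Finset.card_erase_of_mem (mem_univ _), card_univ, card_F4]
  simp [hb0ne]
  ring

open scoped Classical in
lemma prod_ite_wt {n : ℕ} (A B : MvPolynomial (Fin 2) ℚ) (u : Fin n → F4) :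
    ∏ j, (if u j = 0 then A else B) = A ^ (n - wt u) * B ^ (wt u) := by
  classical
  rw [Finset.prod_ite (fun _ => A) (fun _ => B), Finset.prod_const, Finset.prod_const]
  have hwt : (univ.filter fun j : Fin n => ¬ u j = 0).card = wt u := by
    rw [wt, ← Set.ncard_coe_finset]
    congr 1
    ext j; simp
  have hsum := Finset.card_filter_add_card_filter_not
    (s := (univ : Finset (Fin n))) (fun j => u j = 0)
  rw [card_univ, Fintype.card_fin] at hsum
  rw [hwt] at hsum
  rw [hwt, show (univ.filter fun j : Fin n => u j = 0).card = n - wt u from by omega]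

lemma cc_mul_self (a b : F4) : cc a b * cc a b = 1 := by
  have h : ((-1:ℚ)) ^ (tt (a * b ^ 2)) * (-1) ^ (tt (a * b ^ 2)) = 1 := by
    rw [← mul_pow]; norm_num
  unfold cc
  by_cases ha : a = 0
  · rw [if_pos ha]; linear_combination h
  · rw [if_neg ha]; linear_combination h

lemma chi_mul_self {n : ℕ} (v u : Fin n → F4) : chi v u * chi v u = 1 := by
  unfold chi
  rw [← Finset.prod_mul_distrib, Finset.prod_congr rfl fun j _ => cc_mul_self (u j) (v j),
    Finset.prod_const_one]

lemma chi_eq_or {n : ℕ} (v u : Fin n → F4) : chi v u = 1 ∨ chi v u = -1 :=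
  mul_self_eq_one_iff.mp (chi_mul_self v u)

lemma chi_hom {n : ℕ} (v u w : Fin n → F4) (h : trIP u w = 0) :
    chi v (u + w) = chi v u * chi v w := by
  unfold chi
  have hcc : ∀ j, cc ((u + w) j) (v j)
      = cc (u j) (v j) * cc (w j) (v j) * (-1) ^ (tt (u j * (w j) ^ 2)) := fun j => by
    simpa using cc_add (u j) (w j) (v j)
  rw [Finset.prod_congr rfl fun j _ => hcc j, Finset.prod_mul_distrib, Finset.prod_mul_distrib,
    Finset.prod_pow_eq_pow_sum]
  have hc : ((∑ j, tt (u j * (w j) ^ 2) : ℕ) : F4) = trIP u w := by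
    push_cast
    rw [trIP]
    refine Finset.sum_congr rfl fun j _ => ?_
    rw [tt_cast]
    linear_combination (u j) ^ 2 * pow4 (w j)
  rw [h] at hc
  obtain ⟨k, hk⟩ := (CharP.cast_eq_zero_iff F4 2 _).mp hc
  have heven : Even (∑ j, tt (u j * (w j) ^ 2)) := ⟨k, by omega⟩
  rw [Even.neg_one_pow heven, mul_one]

lemma per_u {n : ℕ} (u : Fin n → F4) :
    (MvPolynomial.X 0 + 3 * MvPolynomial.X 1 : MvPolynomial (Fin 2) ℚ) ^ (n - wt u) *
      (MvPolynomial.X 1 - MvPolynomial.X 0) ^ (wt u) =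
    ∑ v : Fin n → F4, chi v u • (MvPolynomial.X 0 ^ (n - wt v) * MvPolynomial.X 1 ^ (wt v)) := by
  classical
  rw [← prod_ite_wt]
  have h1 : ∀ j : Fin n,
      (if u j = 0 then (MvPolynomial.X 0 + 3 * MvPolynomial.X 1 : MvPolynomial (Fin 2) ℚ)
        else MvPolynomial.X 1 - MvPolynomial.X 0)
      = ∑ b : F4, MvPolynomial.C (cc (u j) b) * term b := fun j => by
    by_cases h : u j = 0
    · rw [if_pos h, h, sum_cc_term_zero]
    · rw [if_neg h, sum_cc_term_ne h]
  rw [Finset.prod_congr rfl fun j _ => h1 j, Finset.prod_univ_sum, Fintype.piFinset_univ]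
  refine Finset.sum_congr rfl fun v _ => ?_
  have hterm : ∏ j, term (v j)
      = MvPolynomial.X 0 ^ (n - wt v) * MvPolynomial.X 1 ^ (wt v) := by
    rw [← prod_ite_wt]
    exact Finset.prod_congr rfl fun j _ => by simp [term]
  rw [Finset.prod_mul_distrib, ← map_prod, hterm, chi, MvPolynomial.smul_eq_C_mul]

lemma sum_chi_nonneg {n : ℕ} (C : AddSubgroup (Fin n → F4))
    (hso : (C : Set (Fin n → F4)) ⊆ trDual (C : Set (Fin n → F4))) (v : Fin n → F4) :
    0 ≤ ∑ u ∈ ((C : Set (Fin n → F4))).toFinite.toFinset, chi v u := by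
  classical
  set T := ((C : Set (Fin n → F4))).toFinite.toFinset with hT
  have hmem : ∀ u, u ∈ T ↔ u ∈ C := fun u => Set.Finite.mem_toFinset _
  by_cases hall : ∀ u ∈ T, chi v u = 1
  · rw [Finset.sum_congr rfl hall, Finset.sum_const]
    simp
  · push_neg at hall
    obtain ⟨u0, hu0T, hne⟩ := hall
    have hu0C : u0 ∈ C := (hmem u0).mp hu0T
    have hu0 : chi v u0 = -1 := (chi_eq_or v u0).resolve_left hne
    have hinv : ∀ u : Fin n → F4, u0 + (u0 + u) = u := by
      intro u
      rw [← add_assoc, show u0 + u0 = 0 from funext fun j => CharTwo.add_self_eq_zero _,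
        zero_add]
    have hkey : ∑ u ∈ T, chi v u = ∑ u ∈ T, chi v (u0 + u) := by
      refine Finset.sum_nbij' (fun u => u0 + u) (fun u => u0 + u) ?_ ?_ ?_ ?_ ?_
      · intro a ha; rw [hmem]; exact C.add_mem hu0C ((hmem a).mp ha)
      · intro a ha; rw [hmem]; exact C.add_mem hu0C ((hmem a).mp ha)
      · intro a _; exact hinv a
      · intro a _; exact hinv a
      · intro a _; rw [hinv]
    have h2 : ∑ u ∈ T, chi v (u0 + u) = - ∑ u ∈ T, chi v u := by
      rw [Finset.sum_congr rfl fun u hu => chi_hom v u0 u (hso hu0C u ((hmem u).mp hu)),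
        ← Finset.mul_sum, hu0, neg_one_mul]
    have hz : ∑ u ∈ T, chi v u = 0 := by have := hkey.trans h2; linarith
    rw [hz]

end ShadowAux

open ShadowAux

/-- The shadow enumerator of a self-orthogonal additive code over GF(4) has
nonnegative coefficients. -/
theorem shadow_enumerator_nonneg (n : ℕ) (C : AddSubgroup (Fin n → F4))
    (hso : (C : Set (Fin n → F4)) ⊆ trDual (C : Set (Fin n → F4)))
    (m : Fin 2 →₀ ℕ) :
    0 ≤ MvPolynomial.coeff m
      ((Nat.card C : ℚ)⁻¹ •
        ∑ u ∈ ((C : Set (Fin n → F4))).toFinite.toFinset,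
          (MvPolynomial.X 0 + 3 * MvPolynomial.X 1) ^ (n - wt u) *
            (MvPolynomial.X 1 - MvPolynomial.X 0) ^ (wt u) :
        MvPolynomial (Fin 2) ℚ) := by
  classical
  set T := ((C : Set (Fin n → F4))).toFinite.toFinset with hT
  have h1 : ∑ u ∈ T, (MvPolynomial.X 0 + 3 * MvPolynomial.X 1 : MvPolynomial (Fin 2) ℚ)
        ^ (n - wt u) * (MvPolynomial.X 1 - MvPolynomial.X 0) ^ (wt u)
      = ∑ v : Fin n → F4, (∑ u ∈ T, chi v u) •
          (MvPolynomial.X 0 ^ (n - wt v) * MvPolynomial.X 1 ^ (wt v)) := by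
    rw [Finset.sum_congr rfl fun u _ => per_u u, Finset.sum_comm]
    exact Finset.sum_congr rfl fun v _ => (Finset.sum_smul).symm
  rw [h1, MvPolynomial.coeff_smul, smul_eq_mul]
  refine mul_nonneg (inv_nonneg.mpr (Nat.cast_nonneg _)) ?_
  rw [MvPolynomial.coeff_sum]
  refine Finset.sum_nonneg fun v _ => ?_
  rw [MvPolynomial.coeff_smul, smul_eq_mul]
  refine mul_nonneg (sum_chi_nonneg C hso v) ?_
  rw [MvPolynomial.X_pow_eq_monomial, MvPolynomial.X_pow_eq_monomial,
    MvPolynomial.monomial_mul, MvPolynomial.coeff_monomial]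
  split <;> norm_num
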